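/- Let E be a finite-dimensional real vector space and Ω an alternating bilinear form on E. For every subspace F ⊆ E, the image of F under the flat map equals the annihilator of the Ω-orthogonal of F, i.e. ♭_Ω(F) = (F^⊥)⁰ as subspaces of the dual space E*. -/

import Mathlib

open Module

/-- The `Ω`-orthogonal of a subspace `F`: all `e` with `Ω e f = 0` for every `f ∈ F`. -/
def omegaPerp {E : Type*} [AddCommGroup E] [Module ℝ E]
    (Ω : LinearMap.BilinForm ℝ E) (F : Submodule ℝ E) : Submodule ℝ E where
  carrier := {e | ∀ f ∈ F, Ω e f = 0}
  add_mem' := by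
    intro a b ha hb f hf
    simp [ha f hf, hb f hf]
  zero_mem' := by
    intro f hf
    simp
  smul_mem' := by
    intro c a ha f hf
    simp [ha f hf]

/-- For a finite-dimensional real vector space `E`, an alternating bilinear form `Ω` on `E`
and a subspace `F ⊆ E`, the image of `F` under the flat map `♭_Ω : e ↦ Ω(e,·)` equals the
annihilator of the `Ω`-orthogonal of `F` in the dual space `E*`. -/
theorem map_flat_eq_dualAnnihilator_omegaPerp {E : Type*} [AddCommGroup E] [Module ℝ E]
    [FiniteDimensional ℝ E] (Ω : LinearMap.BilinForm ℝ E) (hΩ : Ω.IsAlt)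
    (F : Submodule ℝ E) :
    Submodule.map (Ω : E →ₗ[ℝ] Module.Dual ℝ E) F = (omegaPerp Ω F).dualAnnihilator := by
  have h : omegaPerp Ω F = (Submodule.map (Ω : E →ₗ[ℝ] Module.Dual ℝ E) F).dualCoannihilator := by
    ext e
    simp only [Submodule.mem_dualCoannihilator, Submodule.mem_map]
    constructor
    · rintro he _ ⟨f, hf, rfl⟩
      have h2 := LinearMap.IsAlt.neg hΩ f e
      have h1 : Ω e f = 0 := he f hf
      change Ω f e = 0
      linarith
    · intro he f hf
      have h1 := he (Ω f) ⟨f, hf, rfl⟩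
      have h2 := LinearMap.IsAlt.neg hΩ f e
      change Ω f e = 0 at h1
      linarith
  rw [h, Subspace.dualCoannihilator_dualAnnihilator_eq]
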